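/- With the big sentence constructed from a 3-CNF formula φ as in the context: (i) for every truth assignment A : Fin p × Bool → Bool such that every clause of φ contains a literal L with A L = true, there exists a solution of the big sentence in which, for every literal L occurring in φ, h_{X_L} (z_L, true) = 1 if and only if A L = true; and (ii) conversely, in every solution of the big sentence, every clause of φ contains a literal L with h_{X_L} (z_L, true) = 1. (The assignments making the big sentence grammatical are exactly those in which the variables x_{i,b} are assigned truth values making all the clauses true.) -/

import Mathlib

/-- The positive part of a signed multiset: `posPart μ a = μ (a, false)`. -/
noncomputable def posPart {α : Type*} (μ : α × Bool →₀ ℕ) : α →₀ ℕ :=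
  Finsupp.comapDomain (fun a => (a, false)) μ (fun _ _ _ _ h => congrArg Prod.fst h)

/-- The negative part of a signed multiset: `negPart μ a = μ (a, true)`. -/
noncomputable def negPart {α : Type*} (μ : α × Bool →₀ ℕ) : α →₀ ℕ :=
  Finsupp.comapDomain (fun a => (a, true)) μ (fun _ _ _ _ h => congrArg Prod.fst h)

/-- Forgetting the signs: `forget μ a = μ (a, false) + μ (a, true)`. -/
noncomputable def forget {α : Type*} (μ : α × Bool →₀ ℕ) : α →₀ ℕ :=
  posPart μ + negPart μ

/-- The signed sum: `sgn μ a = (μ (a, false) : ℤ) − (μ (a, true) : ℤ)`. -/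
noncomputable def sgn {α : Type*} (μ : α × Bool →₀ ℕ) : α →₀ ℤ :=
  (posPart μ).mapRange (Nat.cast : ℕ → ℤ) Nat.cast_zero
    - (negPart μ).mapRange (Nat.cast : ℕ → ℤ) Nat.cast_zero

/-- A signed multiset is functional if it is a single generator, or it has at least one
occurrence with exponent `+1` and at least one with exponent `−1`. -/
def Functional {α : Type*} (μ : α × Bool →₀ ℕ) : Prop :=
  (∃ a : α, μ = Finsupp.single (a, false) 1) ∨
    (∃ a b : α, 0 < μ (a, false) ∧ 0 < μ (b, true))

/-- A list of signed multisets is grammatical for `s` if the signed sums of its entries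
add up to `Finsupp.single s 1`. -/
noncomputable def Grammatical {α : Type*} (s : α) (l : List (α × Bool →₀ ℕ)) : Prop :=
  (l.map sgn).sum = Finsupp.single s 1

/-- The list of all literal occurrences of a 3-CNF formula. -/
def lits {p : ℕ} (φ : List ((Fin p × Bool) × (Fin p × Bool) × (Fin p × Bool))) :
    List (Fin p × Bool) :=
  φ.flatMap fun c => [c.1, c.2.1, c.2.2]

/-- The semantic type `t c = d + z_{L₁} + z_{L₂} + z_{L₃}` of a clause `c`. -/
noncomputable def clauseType {α : Type*} {p : ℕ} (d : α) (z : Fin p × Bool → α)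
    (c : (Fin p × Bool) × (Fin p × Bool) × (Fin p × Bool)) : α →₀ ℕ :=
  Finsupp.single d 1 + Finsupp.single (z c.1) 1 + Finsupp.single (z c.2.1) 1 +
    Finsupp.single (z c.2.2) 1

/-- The semantic type `v L = z_L + 2 • y_L` of a literal `L`. -/
noncomputable def litType {α : Type*} {p : ℕ} (z y : Fin p × Bool → α) (L : Fin p × Bool) :
    α →₀ ℕ :=
  Finsupp.single (z L) 1 + 2 • Finsupp.single (y L) 1

/-- The big sentence: the word `S`, then for each clause `c_j` the words `C_j` and `D_j`,
then `n_L` copies of the word `X_L` for each literal `L` (one copy per occurrence of `L`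
in the formula), all replaced by the chosen lifts. -/
noncomputable def bigSentence {α : Type*} {p : ℕ}
    (φ : List ((Fin p × Bool) × (Fin p × Bool) × (Fin p × Bool)))
    (hS : α × Bool →₀ ℕ) (hC hD : Fin φ.length → (α × Bool →₀ ℕ))
    (hX : Fin p × Bool → (α × Bool →₀ ℕ)) : List (α × Bool →₀ ℕ) :=
  hS :: (((List.finRange φ.length).flatMap fun j => [hC j, hD j]) ++ (lits φ).map hX)

/-- A solution of the big sentence: all lifts are functional, have the prescribed images
under `forget`, and the big sentence is grammatical for `s`. -/
noncomputable def BigSolution {α : Type*} {p : ℕ} (s d : α) (z y : Fin p × Bool → α)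
    (φ : List ((Fin p × Bool) × (Fin p × Bool) × (Fin p × Bool)))
    (hS : α × Bool →₀ ℕ) (hC hD : Fin φ.length → (α × Bool →₀ ℕ))
    (hX : Fin p × Bool → (α × Bool →₀ ℕ)) : Prop :=
  Functional hS ∧ forget hS = Finsupp.single s 1 ∧
  (∀ j : Fin φ.length, Functional (hC j) ∧ forget (hC j) = clauseType d z (φ.get j)) ∧
  (∀ j : Fin φ.length, Functional (hD j) ∧ forget (hD j) = Finsupp.single d 1) ∧
  (∀ L ∈ lits φ, Functional (hX L) ∧ forget (hX L) = litType z y L) ∧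
  Grammatical s (bigSentence φ hS hC hD hX)

section Helpers

variable {α : Type*}

open scoped Classical

lemma forget_apply (μ : α × Bool →₀ ℕ) (a : α) : forget μ a = μ (a, false) + μ (a, true) := by
  simp [forget, _root_.posPart, _root_.negPart]
  rfl

lemma sgn_apply (μ : α × Bool →₀ ℕ) (a : α) :
    sgn μ a = (μ (a, false) : ℤ) - (μ (a, true) : ℤ) := by
  simp [sgn, _root_.posPart, _root_.negPart]
  rfl

lemma forget_add (μ ν : α × Bool →₀ ℕ) : forget (μ + ν) = forget μ + forget ν := by
  ext a; simp [forget_apply]; ring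

lemma sgn_add (μ ν : α × Bool →₀ ℕ) : sgn (μ + ν) = sgn μ + sgn ν := by
  ext a; simp [sgn_apply]; ring

lemma single_pair_apply (a x : α) (b b' : Bool) (n : ℕ) :
    (Finsupp.single (a, b) n) (x, b') = if a = x ∧ b = b' then n else 0 := by
  classical
  rw [Finsupp.single_apply]
  simp [Prod.ext_iff]

lemma forget_single (a : α) (b : Bool) (n : ℕ) :
    forget (Finsupp.single (a, b) n) = Finsupp.single a n := by
  ext x
  cases b <;> simp [forget_apply, single_pair_apply, Finsupp.single_apply]

lemma sgn_single_false (a : α) (n : ℕ) :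
    sgn (Finsupp.single (a, false) n) = Finsupp.single a (n : ℤ) := by
  ext x; simp [sgn_apply, single_pair_apply, Finsupp.single_apply]

lemma sgn_single_true (a : α) (n : ℕ) :
    sgn (Finsupp.single (a, true) n) = -Finsupp.single a (n : ℤ) := by
  ext x; simp [sgn_apply, single_pair_apply, Finsupp.single_apply]

lemma functional_forget_single {μ : α × Bool →₀ ℕ} {a : α}
    (hf : Functional μ)
    (h : forget μ = Finsupp.single a 1) : μ = Finsupp.single (a, false) 1 := by
  rcases hf with ⟨b, rfl⟩ | ⟨b, c, hb, hc⟩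
  · rw [forget_single] at h
    obtain rfl : b = a := by
      have := DFunLike.congr_fun h b
      simp [Finsupp.single_apply] at this
      by_contra hne
      simp [Ne.symm hne] at this
    rfl
  · exfalso
    have hb' : b = a := by
      have := DFunLike.congr_fun h b
      rw [forget_apply] at this
      by_contra hne
      simp [Finsupp.single_apply, Ne.symm hne] at this
      omega
    have hc' : c = a := by
      have := DFunLike.congr_fun h c
      rw [forget_apply] at this
      by_contra hne
      simp [Finsupp.single_apply, Ne.symm hne] at this
      omega
    rw [hb'] at hb; rw [hc'] at hc
    have h2 := DFunLike.congr_fun h a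
    rw [forget_apply] at h2
    simp [Finsupp.single_apply] at h2
    omega

lemma sum_flatMap_pair {β M : Type*} [AddCommMonoid M] (l : List β) (f g : β → M) :
    (l.flatMap fun j => [f j, g j]).sum = (l.map fun j => f j + g j).sum := by
  induction l with
  | nil => rfl
  | cons a l ih => simp [ih, add_assoc]

lemma map_get_sum {β M : Type*} [AddCommMonoid M] (l : List β) (F : β → M) :
    ((List.finRange l.length).map fun j => F (l.get j)).sum = (l.map F).sum := by
  conv_rhs => rw [← List.map_get_finRange l, List.map_map]
  simp [Function.comp_def]

lemma lits_map_sum {p : ℕ} {M : Type*} [AddCommMonoid M]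
    (φ : List ((Fin p × Bool) × (Fin p × Bool) × (Fin p × Bool))) (g : Fin p × Bool → M) :
    ((lits φ).map g).sum =
      ((List.finRange φ.length).map fun j =>
        g (φ.get j).1 + g (φ.get j).2.1 + g (φ.get j).2.2).sum := by
  have h1 : ((lits φ).map g).sum = (φ.map fun c => g c.1 + g c.2.1 + g c.2.2).sum := by
    induction φ with
    | nil => rfl
    | cons c φ ih =>
        rw [show lits (c :: φ) = [c.1, c.2.1, c.2.2] ++ lits φ from rfl]
        simp [ih, add_assoc]
  rw [h1, ← map_get_sum φ (fun c => g c.1 + g c.2.1 + g c.2.2)]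

lemma list_sum_apply {β γ M : Type*} [AddCommMonoid M] (l : List β) (f : β → (γ →₀ M))
    (x : γ) : (l.map f).sum x = (l.map fun i => f i x).sum := by
  induction l with
  | nil => simp
  | cons a l ih => simp [ih]

lemma bigSentence_sum {α : Type*} {p : ℕ}
    (φ : List ((Fin p × Bool) × (Fin p × Bool) × (Fin p × Bool)))
    (hS : α × Bool →₀ ℕ) (hC hD : Fin φ.length → (α × Bool →₀ ℕ))
    (hX : Fin p × Bool → (α × Bool →₀ ℕ)) :
    ((bigSentence φ hS hC hD hX).map sgn).sum =
      sgn hS + ((List.finRange φ.length).map fun j =>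
        sgn (hC j) + sgn (hD j) +
          (sgn (hX (φ.get j).1) + sgn (hX (φ.get j).2.1) + sgn (hX (φ.get j).2.2))).sum := by
  rw [bigSentence]
  simp only [List.map_cons, List.map_append, List.sum_cons, List.sum_append, List.map_flatMap,
    List.map_map, List.map_nil, Function.comp_def]
  rw [sum_flatMap_pair, lits_map_sum φ (fun L => sgn (hX L)), ← List.sum_map_add]

lemma mem_nonneg_sum_zero {β : Type*} {l : List β} {f : β → ℤ}
    (h0 : (l.map f).sum = 0) (hn : ∀ x ∈ l, 0 ≤ f x) : ∀ x ∈ l, f x = 0 := by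
  intro x hx
  have h1 : f x ≤ (l.map f).sum := by
    refine List.single_le_sum ?_ _ (List.mem_map_of_mem (f := f) hx)
    intro v hv
    obtain ⟨i, hi, rfl⟩ := List.mem_map.mp hv
    exact hn i hi
  have h2 := hn x hx
  omega

end Helpers

/-- The assignments making the big sentence grammatical are exactly those in which the
variables are assigned truth values making all the clauses true:
(i) every truth assignment making every clause true yields a solution of the big sentence
in which `h_{X_L} (z_L, true) = 1` iff `L` is true;
(ii) in every solution of the big sentence, every clause contains a literal `L` with
`h_{X_L} (z_L, true) = 1`. -/
theorem big_sentence_characterization {α : Type*} {p : ℕ} (s d : α)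
    (z y : Fin p × Bool → α)
    (hz : Function.Injective z) (hy : Function.Injective y)
    (hsd : s ≠ d) (hsz : ∀ L, s ≠ z L) (hsy : ∀ L, s ≠ y L)
    (hdz : ∀ L, d ≠ z L) (hdy : ∀ L, d ≠ y L) (hzy : ∀ L L', z L ≠ y L')
    (φ : List ((Fin p × Bool) × (Fin p × Bool) × (Fin p × Bool))) :
    (∀ A : Fin p × Bool → Bool,
      (∀ c ∈ φ, A c.1 = true ∨ A c.2.1 = true ∨ A c.2.2 = true) →
      ∃ (hS : α × Bool →₀ ℕ) (hC hD : Fin φ.length → (α × Bool →₀ ℕ))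
        (hX : Fin p × Bool → (α × Bool →₀ ℕ)),
        BigSolution s d z y φ hS hC hD hX ∧
        ∀ L ∈ lits φ, (hX L (z L, true) = 1 ↔ A L = true)) ∧
    (∀ (hS : α × Bool →₀ ℕ) (hC hD : Fin φ.length → (α × Bool →₀ ℕ))
        (hX : Fin p × Bool → (α × Bool →₀ ℕ)),
      BigSolution s d z y φ hS hC hD hX →
      ∀ c ∈ φ, hX c.1 (z c.1, true) = 1 ∨ hX c.2.1 (z c.2.1, true) = 1 ∨
        hX c.2.2 (z c.2.2, true) = 1) := by
  classical
  have hzd : ∀ L, z L ≠ d := fun L => (hdz L).symm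
  have hyd : ∀ L, y L ≠ d := fun L => (hdy L).symm
  have hyz : ∀ L L', y L ≠ z L' := fun L L' => (hzy L' L).symm
  have memlits : ∀ j : Fin φ.length,
      (φ.get j).1 ∈ lits φ ∧ (φ.get j).2.1 ∈ lits φ ∧ (φ.get j).2.2 ∈ lits φ := by
    intro j
    have hcj : φ.get j ∈ φ := List.get_mem φ j
    refine ⟨?_, ?_, ?_⟩ <;> exact List.mem_flatMap.mpr ⟨φ.get j, hcj, by simp⟩
  constructor
  · -- part (i)
    intro A hA
    refine ⟨Finsupp.single (s, false) 1,
      fun j => Finsupp.single (d, true) 1 +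
        Finsupp.single (z (φ.get j).1, !A (φ.get j).1) 1 +
        Finsupp.single (z (φ.get j).2.1, !A (φ.get j).2.1) 1 +
        Finsupp.single (z (φ.get j).2.2, !A (φ.get j).2.2) 1,
      fun _ => Finsupp.single (d, false) 1,
      fun L => Finsupp.single (z L, A L) 1 + Finsupp.single (y L, false) 1 +
        Finsupp.single (y L, true) 1,
      ⟨Or.inl ⟨s, rfl⟩, forget_single s false 1, ?_, ?_, ?_, ?_⟩, ?_⟩
    · -- clauses
      intro j
      constructor
      · rcases hA (φ.get j) (List.get_mem φ j) with h1 | h1 | h1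
        · exact Or.inr ⟨z (φ.get j).1, d, by
            simp only [Finsupp.add_apply, single_pair_apply, h1]
            simp [hzd], by
            simp only [Finsupp.add_apply, single_pair_apply]
            simp [hzd]⟩
        · exact Or.inr ⟨z (φ.get j).2.1, d, by
            simp only [Finsupp.add_apply, single_pair_apply, h1]
            simp [hzd], by
            simp only [Finsupp.add_apply, single_pair_apply]
            simp [hzd]⟩
        · exact Or.inr ⟨z (φ.get j).2.2, d, by
            simp only [Finsupp.add_apply, single_pair_apply, h1]
            simp [hzd], by
            simp only [Finsupp.add_apply, single_pair_apply]
            simp [hzd]⟩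
      · simp [forget_add, forget_single, clauseType]
    · intro j
      exact ⟨Or.inl ⟨d, rfl⟩, forget_single d false 1⟩
    · intro L hL
      constructor
      · refine Or.inr ⟨y L, y L, ?_, ?_⟩ <;>
          · simp only [Finsupp.add_apply, single_pair_apply]
            simp [hzy]
      · rw [forget_add, forget_add, forget_single, forget_single, forget_single, litType,
          two_smul, add_assoc]
    · -- grammatical
      rw [Grammatical, bigSentence_sum, sgn_single_false, Nat.cast_one]
      rw [show ((List.finRange φ.length).map _).sum = (0 : α →₀ ℤ) from ?_, add_zero]
      refine List.sum_eq_zero ?_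
      intro x hx
      obtain ⟨j, _, rfl⟩ := List.mem_map.mp hx
      cases h1 : A (φ.get j).1 <;> cases h2 : A (φ.get j).2.1 <;> cases h3 : A (φ.get j).2.2 <;>
        · simp only [sgn_add, sgn_single_false, sgn_single_true, h1, h2, h3,
            Bool.not_true, Bool.not_false, Nat.cast_one]
          abel
    · -- iff
      intro L _
      cases hAL : A L <;>
        simp [Finsupp.add_apply, single_pair_apply, hAL, fun L' => (hzy L L').symm]
  · -- part (ii)
    rintro hS hC hD hX ⟨hSf, hSforget, hCprop, hDprop, hXprop, hGram⟩ c hc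
    obtain ⟨j0, hj0⟩ := List.mem_iff_get.mp hc
    subst hj0
    obtain ⟨m1, m2, m3⟩ := memlits j0
    have hSval := functional_forget_single hSf hSforget
    have hDval : ∀ j, hD j = Finsupp.single (d, false) 1 :=
      fun j => functional_forget_single (hDprop j).1 (hDprop j).2
    rw [Grammatical, bigSentence_sum, hSval, sgn_single_false, Nat.cast_one] at hGram
    have hT := add_eq_left.mp hGram
    have key : ∀ x : α,
        ((List.finRange φ.length).map fun j =>
          sgn (hC j) x + sgn (hD j) x +
            (sgn (hX (φ.get j).1) x + sgn (hX (φ.get j).2.1) x +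
              sgn (hX (φ.get j).2.2) x)).sum = 0 := by
      intro x
      have h0 := DFunLike.congr_fun hT x
      rw [list_sum_apply] at h0
      simpa using h0
    have hCdpq : ∀ j : Fin φ.length, hC j (d, false) + hC j (d, true) = 1 := by
      intro j
      have h1 := DFunLike.congr_fun (hCprop j).2 d
      rw [forget_apply] at h1
      simpa [clauseType, Finsupp.single_apply, hzd] using h1
    have hXd : ∀ L ∈ lits φ, sgn (hX L) d = 0 := by
      intro L hL
      have h1 := DFunLike.congr_fun (hXprop L hL).2 d
      rw [forget_apply] at h1
      simp [litType, Finsupp.single_apply, hzd, hyd] at h1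
      rw [sgn_apply]
      omega
    have hCd : ∀ j : Fin φ.length, hC j (d, false) = 0 := by
      intro j
      have h0 := mem_nonneg_sum_zero (key d) ?_ j (List.mem_finRange j)
      · have h2 := hCdpq j
        obtain ⟨n1, n2, n3⟩ := memlits j
        rw [hXd _ n1, hXd _ n2, hXd _ n3, hDval j, sgn_single_false, sgn_apply,
          Finsupp.single_apply, if_pos rfl] at h0
        omega
      · intro i _
        have h2 := hCdpq i
        obtain ⟨n1, n2, n3⟩ := memlits i
        rw [hXd _ n1, hXd _ n2, hXd _ n3, hDval i, sgn_single_false, sgn_apply,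
          Finsupp.single_apply, if_pos rfl]
        omega
    -- key lemma at z L
    have keyZ : ∀ L ∈ lits φ, ∀ j1 : Fin φ.length, 0 < hC j1 (z L, false) →
        hX L (z L, true) = 1 := by
      intro L hL j1 hpos
      have h1 := DFunLike.congr_fun (hXprop L hL).2 (z L)
      rw [forget_apply] at h1
      rw [show (litType z y L) (z L) = 1 by
        simp [litType, Finsupp.single_apply, hyz]] at h1
      by_contra hb
      have hb0 : hX L (z L, true) = 0 := by omega
      have ha1 : hX L (z L, false) = 1 := by omega
      have hXz : ∀ L' ∈ lits φ, sgn (hX L') (z L) = if L' = L then 1 else 0 := by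
        intro L' hL'
        by_cases hLL : L' = L
        · subst hLL
          rw [sgn_apply, ha1, hb0, if_pos rfl]
          norm_num
        · have h2 := DFunLike.congr_fun (hXprop L' hL').2 (z L)
          rw [forget_apply] at h2
          rw [show (litType z y L') (z L) = 0 by
            simp [litType, Finsupp.single_apply, hyz, hz.eq_iff, hLL]] at h2
          rw [sgn_apply, if_neg hLL]
          omega
      have hCpq : ∀ j : Fin φ.length,
          hC j (z L, false) + hC j (z L, true) =
            (if (φ.get j).1 = L then 1 else 0) + (if (φ.get j).2.1 = L then 1 else 0) +
              (if (φ.get j).2.2 = L then 1 else 0) := by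
        intro j
        have h2 := DFunLike.congr_fun (hCprop j).2 (z L)
        rw [forget_apply] at h2
        rw [show clauseType d z (φ.get j) (z L) =
            (if (φ.get j).1 = L then 1 else 0) + (if (φ.get j).2.1 = L then 1 else 0) +
              (if (φ.get j).2.2 = L then 1 else 0) by
          simp [clauseType, Finsupp.single_apply, hdz L, hz.eq_iff]] at h2
        exact h2
      have h0 := mem_nonneg_sum_zero (key (z L)) ?_ j1 (List.mem_finRange j1)
      · have h2 := hCpq j1
        obtain ⟨n1, n2, n3⟩ := memlits j1
        rw [hXz _ n1, hXz _ n2, hXz _ n3, hDval j1, sgn_single_false, sgn_apply,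
          Finsupp.single_apply, if_neg (hdz L)] at h0
        split_ifs at h0 h2 <;> omega
      · intro i _
        have h2 := hCpq i
        obtain ⟨n1, n2, n3⟩ := memlits i
        rw [hXz _ n1, hXz _ n2, hXz _ n3, hDval i, sgn_single_false, sgn_apply,
          Finsupp.single_apply, if_neg (hdz L)]
        split_ifs at h2 ⊢ <;> omega
    -- use functionality of hC j0
    rcases (hCprop j0).1 with ⟨a, ha⟩ | ⟨a, b, hpa, _⟩
    · exfalso
      have h2 := hCdpq j0
      have h3 := hCd j0
      have h4 : hC j0 (d, true) = 1 := by omega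
      rw [ha, single_pair_apply] at h4
      simp at h4
    · have h4 := DFunLike.congr_fun (hCprop j0).2 a
      rw [forget_apply] at h4
      have h5 : 0 < clauseType d z (φ.get j0) a := by omega
      have hmem : a = d ∨ a = z (φ.get j0).1 ∨ a = z (φ.get j0).2.1 ∨
          a = z (φ.get j0).2.2 := by
        by_contra hcon
        push_neg at hcon
        obtain ⟨hn1, hn2, hn3, hn4⟩ := hcon
        rw [show clauseType d z (φ.get j0) a = 0 by
          simp only [clauseType, Finsupp.coe_add, Pi.add_apply, Finsupp.single_apply]
          rw [if_neg (Ne.symm hn1), if_neg (Ne.symm hn2), if_neg (Ne.symm hn3),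
            if_neg (Ne.symm hn4)]
          simp] at h5
        omega
      rcases hmem with rfl | rfl | rfl | rfl
      · exact absurd hpa (by simp [hCd j0])
      · exact Or.inl (keyZ _ m1 j0 hpa)
      · exact Or.inr (Or.inl (keyZ _ m2 j0 hpa))
      · exact Or.inr (Or.inr (keyZ _ m3 j0 hpa))
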